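/- Let p ≥ 3 be an integer and let G be a K_{1,p}-free graph. Then α(G) ≤ w(G) := max{k ∈ ℤ | Σ_{i=1}^k d_i + (1/2)Σ_{i=k+1}^n d_i − (n−k)(p−1)/2 ≤ m(G)}. -/

import Mathlib

open Finset

namespace DSI

variable {V : Type*} (G : SimpleGraph V) [Fintype V] [DecidableEq V] [DecidableRel G.Adj]

/-- The degree sequence of `G`, sorted in non-decreasing order. -/
def dseq : List ℕ := (Finset.univ.val.map (fun v => G.degree v)).sort (· ≤ ·)

/-- The sum of the `k` smallest degrees, `Σ_{i=1}^k d_i`. -/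
def sumSmallest (k : ℕ) : ℕ := ((dseq G).take k).sum

/-- The sum of the `k` largest degrees, `Σ_{i=1}^k d_{n-i+1}`. -/
def sumLargest (k : ℕ) : ℕ := ((dseq G).reverse.take k).sum

/-- The number of edges `m(G)`. -/
def esize : ℕ := G.edgeFinset.card

/-- `m[S]`: the number of edges of the subgraph induced by `S`. -/
def mOn (S : Finset V) : ℕ := (S.sym2.filter (fun e => e ∈ G.edgeSet)).card

/-- A set `I` is `j`-independent if every vertex of `I` has fewer than `j` neighbours in `I`,
i.e. the induced subgraph has maximum degree `< j`. -/
def JIndep (j : ℕ) (I : Finset V) : Prop := ∀ v ∈ I, (I.filter (G.Adj v)).card < j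

/-- The `j`-independence number `α_j(G)`. -/
noncomputable def alphaJ (j : ℕ) : ℕ := sSup {k | ∃ I : Finset V, JIndep G j I ∧ I.card = k}

/-- The family `F` of maximum `j`-independent sets. -/
noncomputable def maxJIndep (j : ℕ) : Set (Finset V) :=
  {S | JIndep G j S ∧ S.card = alphaJ G j}

/-- `max_{S ∈ F} (m[V−S] − m[S])`. -/
noncomputable def fU (j : ℕ) : ℤ :=
  sSup ((fun S : Finset V => (mOn G Sᶜ : ℤ) - (mOn G S : ℤ)) '' maxJIndep G j)

/-- `min_{S ∈ F} (m[V−S] − m[S])`. -/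
noncomputable def fL (j : ℕ) : ℤ :=
  sInf ((fun S : Finset V => (mOn G Sᶜ : ℤ) - (mOn G S : ℤ)) '' maxJIndep G j)

/-- The upper `j`-annihilation number `a_j(G)`. -/
noncomputable def aJ (j : ℕ) : ℕ :=
  sSup {k | k ≤ Fintype.card V ∧ (sumSmallest G k : ℤ) + fU G j ≤ (esize G : ℤ)}

/-- The lower `j`-annihilation number `c_j(G)`. -/
noncomputable def cJ (j : ℕ) : ℕ :=
  sInf {k | k ≤ Fintype.card V ∧ (esize G : ℤ) ≤ (sumLargest G k : ℤ) + fL G j}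

/-- The annihilation number `a(G)`. -/
noncomputable def annihilation : ℕ :=
  sSup {k | k ≤ Fintype.card V ∧ sumSmallest G k ≤ esize G}

/-- An independent set. -/
def IndepSet (I : Finset V) : Prop := ∀ v ∈ I, ∀ w ∈ I, ¬ G.Adj v w

/-- The independence number `α(G)`. -/
noncomputable def alpha : ℕ := sSup {k | ∃ I : Finset V, IndepSet G I ∧ I.card = k}

end DSI
/-- `G` is `K_{1,p}`-free: it has no induced star `K_{1,p}`, i.e. no vertex `v` together
with a set `s` of `p` pairwise non-adjacent neighbours of `v`. -/
def DSI.K1pFree {V : Type*} (G : SimpleGraph V) (p : ℕ) : Prop :=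
  ¬ ∃ (v : V) (s : Finset V), s.card = p ∧ v ∉ s ∧ (∀ w ∈ s, G.Adj v w) ∧
      ∀ w ∈ s, ∀ u ∈ s, ¬ G.Adj w u

/-- The index `w(G) = max { k | Σ_{i=1}^k d_i + (1/2) Σ_{i=k+1}^n d_i
    - (n-k)(p-1)/2 ≤ m(G) }`. -/
noncomputable def DSI.wIdx {V : Type*} (G : SimpleGraph V) [Fintype V]
    [DecidableEq V] [DecidableRel G.Adj] (p : ℕ) : ℕ :=
  sSup {k | k ≤ Fintype.card V ∧
    (DSI.sumSmallest G k : ℚ) + (1 / 2) * ((((DSI.dseq G).drop k).sum : ℕ) : ℚ)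
      - ((Fintype.card V : ℚ) - (k : ℚ)) * ((p : ℚ) - 1) / 2 ≤ (DSI.esize G : ℚ)}

private lemma take_sorted_sum_le' (l : List ℕ) (hl : l.Pairwise (· ≤ ·)) :
    ∀ s : Multiset ℕ, s ≤ ↑l → ((l.take (Multiset.card s)).sum ≤ s.sum) := by
  induction l with
  | nil =>
    intro s hs
    have : s = 0 := le_bot_iff.mp hs
    simp [this]
  | cons a l ih =>
    intro s hs
    rcases Nat.eq_zero_or_pos (Multiset.card s) with h0 | hpos
    · simp [h0]
    by_cases ha : a ∈ s
    · have hse : s.erase a ≤ ↑l := by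
        have := Multiset.erase_le_erase a hs
        simpa using this
      have hcard : Multiset.card (s.erase a) = Multiset.card s - 1 := by
        simp [Multiset.card_erase_of_mem ha]
      have htake : List.take (Multiset.card s) (a :: l) = a :: List.take (Multiset.card s - 1) l :=
        List.take_cons hpos
      have hih2 := ih (List.pairwise_cons.mp hl).2 _ hse
      rw [hcard] at hih2
      have hsum : s.sum = a + (s.erase a).sum := by
        conv_lhs => rw [← Multiset.cons_erase ha]
        simp
      rw [htake, List.sum_cons, hsum]
      exact add_le_add_right hih2 a
    · have hsl : s ≤ ↑l := by
        rw [Multiset.le_iff_count]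
        intro b
        have hb := Multiset.le_iff_count.mp hs b
        by_cases hba : b = a
        · subst hba; simp [Multiset.count_eq_zero_of_notMem ha]
        · simpa [Multiset.count_cons, List.count_cons, hba, Ne.symm hba] using hb
      set k := Multiset.card s with hk
      have hklen : k ≤ l.length := by
        have := Multiset.card_le_card hsl
        simpa using this
      have hk1 : k - 1 < l.length := by omega
      have htake : List.take k (a :: l) = a :: List.take (k - 1) l := List.take_cons hpos
      have hget : a ≤ l[k-1] := by
        have hmem : l[k-1] ∈ l := List.getElem_mem hk1
        exact (List.pairwise_cons.mp hl).1 _ hmem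
      have hstep : (List.take k l).sum = (List.take (k-1) l).sum + l[k-1] := by
        have h := List.sum_take_succ l (k-1) hk1
        have hk' : k - 1 + 1 = k := by omega
        rw [hk'] at h
        exact h
      have hih : (List.take k l).sum ≤ s.sum := ih (List.pairwise_cons.mp hl).2 s hsl
      rw [htake, List.sum_cons]
      omega

private lemma indep_degree_sum {V : Type*} (G : SimpleGraph V) [Fintype V] [DecidableEq V]
    [DecidableRel G.Adj] (I : Finset V) (hI : ∀ v ∈ I, ∀ w ∈ I, ¬ G.Adj v w) :
    ∑ v ∈ I, G.degree v = ∑ u ∈ Iᶜ, (I.filter (G.Adj u)).card := by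
  have h1 : ∀ v ∈ I, G.degree v = (Iᶜ.filter (G.Adj v)).card := by
    intro v hv
    rw [← SimpleGraph.card_neighborFinset_eq_degree, SimpleGraph.neighborFinset_eq_filter]
    congr 1
    ext u
    simp only [Finset.mem_filter, Finset.mem_univ, true_and, Finset.mem_compl]
    constructor
    · intro hadj
      exact ⟨fun hu => hI v hv u hu hadj, hadj⟩
    · exact fun h => h.2
  rw [Finset.sum_congr rfl h1]
  simp only [Finset.card_filter]
  rw [Finset.sum_comm]
  apply Finset.sum_congr rfl
  intro u _
  apply Finset.sum_congr rfl
  intro v _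
  simp [G.adj_comm]

theorem alpha_le_wIdx {V : Type*} (G : SimpleGraph V) [Fintype V]
    [DecidableEq V] [DecidableRel G.Adj] (p : ℕ) (hp : 3 ≤ p)
    (hfree : DSI.K1pFree G p) :
    DSI.alpha G ≤ DSI.wIdx G p := by
  classical
  set n := Fintype.card V with hn
  -- the set defining alpha is nonempty and bounded
  have hS : DSI.alpha G ∈ {k | ∃ I : Finset V, DSI.IndepSet G I ∧ I.card = k} := by
    apply Nat.sSup_mem
    · exact ⟨0, ∅, by intro v hv; simp at hv, by simp⟩
    · exact ⟨n, fun k ⟨I, _, hIc⟩ => hIc ▸ (hn ▸ I.card_le_univ.trans (by simp))⟩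
  obtain ⟨I, hI, hIcard⟩ := hS
  set k := DSI.alpha G with hka
  have hkn : k ≤ n := hIcard ▸ (by simpa using I.card_le_univ)
  -- sum of k smallest degrees ≤ sum of degrees over I
  have hsmall : DSI.sumSmallest G k ≤ ∑ v ∈ I, G.degree v := by
    have hperm : (↑(DSI.dseq G) : Multiset ℕ) = Finset.univ.val.map (fun v => G.degree v) :=
      Multiset.sort_eq _ _
    have hle : (I.val.map (fun v => G.degree v)) ≤ ↑(DSI.dseq G) := by
      rw [hperm]
      exact Multiset.map_le_map (Finset.val_le_iff.mpr I.subset_univ)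
    have := take_sorted_sum_le' (DSI.dseq G) (Multiset.pairwise_sort _ _) _ hle
    have hc : Multiset.card (I.val.map (fun v => G.degree v)) = k := by
      simp [hIcard]
    rw [hc] at this
    rw [DSI.sumSmallest]
    exact this
  -- each vertex outside I has at most p-1 neighbours in I
  have hbound : ∀ u ∈ Iᶜ, (I.filter (G.Adj u)).card ≤ p - 1 := by
    intro u hu
    by_contra hcon
    push_neg at hcon
    have hp' : p ≤ (I.filter (G.Adj u)).card := by omega
    obtain ⟨s, hs, hscard⟩ := Finset.exists_subset_card_eq hp'
    apply hfree
    refine ⟨u, s, hscard, ?_, ?_, ?_⟩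
    · intro hus
      exact (Finset.mem_compl.mp hu) (Finset.mem_filter.mp (hs hus)).1
    · exact fun w hw => (Finset.mem_filter.mp (hs hw)).2
    · intro w hw v hv
      exact hI w (Finset.mem_filter.mp (hs hw)).1 v (Finset.mem_filter.mp (hs hv)).1
  -- hence the key numeric bound
  have hkey : DSI.sumSmallest G k ≤ (n - k) * (p - 1) := by
    calc DSI.sumSmallest G k ≤ ∑ v ∈ I, G.degree v := hsmall
      _ = ∑ u ∈ Iᶜ, (I.filter (G.Adj u)).card := indep_degree_sum G I hI
      _ ≤ ∑ _u ∈ Iᶜ, (p - 1) := Finset.sum_le_sum hbound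
      _ = (n - k) * (p - 1) := by
          rw [Finset.sum_const, smul_eq_mul, Finset.card_compl, hIcard]
  -- total degree sum
  have htot : DSI.sumSmallest G k + ((DSI.dseq G).drop k).sum = 2 * DSI.esize G := by
    have h1 : DSI.sumSmallest G k + ((DSI.dseq G).drop k).sum = (DSI.dseq G).sum := by
      rw [DSI.sumSmallest, ← List.sum_append, List.take_append_drop]
    rw [h1]
    have h2 : (DSI.dseq G).sum = (Finset.univ.val.map (fun v => G.degree v)).sum := by
      rw [← Multiset.sort_eq (Finset.univ.val.map (fun v => G.degree v)) (· ≤ ·)]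
      rfl
    rw [h2]
    have h3 := SimpleGraph.sum_degrees_eq_twice_card_edges G
    exact h3
  -- now show k is in the defining set of wIdx
  apply le_csSup
  · exact ⟨n, fun x hx => hx.1⟩
  refine ⟨hkn, ?_⟩
  have hA := hkey
  set A := DSI.sumSmallest G k with hA'
  set D := ((DSI.dseq G).drop k).sum with hD'
  set m := DSI.esize G with hm'
  have c1 : (A : ℚ) + (D : ℚ) = 2 * (m : ℚ) := by exact_mod_cast htot
  have c2 : (A : ℚ) ≤ ((n : ℚ) - (k : ℚ)) * ((p : ℚ) - 1) := by
    have : ((n - k) * (p - 1) : ℕ) = ((n : ℚ) - k) * ((p : ℚ) - 1) := by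
      push_cast [Nat.cast_sub hkn, Nat.cast_sub (by omega : 1 ≤ p)]
      ring
    calc (A : ℚ) ≤ (((n - k) * (p - 1) : ℕ) : ℚ) := by exact_mod_cast hA
      _ = ((n : ℚ) - k) * ((p : ℚ) - 1) := this
  linarith
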